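/- Let C = W_D^A for some D ⊆ A ⊆ Φ⁺, with C nonempty. Then the union of alcoves ⋃_{w∈C} Q_w equals the polyhedron {x ∈ E : ⟨x,α⟩ ≤ 0 for all α ∈ D, ⟨x,β⟩ ≥ 0 for all β ∈ Φ⁺∖A, and ⟨x,w⁻¹ξ⟩ ≤ 1 for all w ∈ C}. In particular, the generalized order polytope O(C) = ⋃_{w∈C} Q_w is a convex polytope. -/

import Mathlib

open InnerProductSpace

noncomputable section

variable {E : Type*} [NormedAddCommGroup E] [InnerProductSpace ℝ E]

/-- The reflection across the hyperplane orthogonal to `α`: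
`s_α(x) = x − (2⟨α,x⟩/⟨α,α⟩)α`. -/
def sRefl (α x : E) : E := x - (2 * ⟪α, x⟫_ℝ / ⟪α, α⟫_ℝ) • α

/-- `Φ` is a finite crystallographic (reduced) root system spanning `E`. -/
def IsRootSystem (Φ : Set E) : Prop :=
  Φ.Finite ∧ (0 : E) ∉ Φ ∧ Submodule.span ℝ Φ = ⊤ ∧
    (∀ α ∈ Φ, ∀ β ∈ Φ, sRefl α β ∈ Φ) ∧
    (∀ α ∈ Φ, ∀ β ∈ Φ, ∃ n : ℤ, 2 * ⟪α, β⟫_ℝ / ⟪α, α⟫_ℝ = (n : ℝ)) ∧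
    (∀ α ∈ Φ, ∀ t : ℝ, t • α ∈ Φ → t = 1 ∨ t = -1)

/-- `b` is a base of the root system `Φ`: a basis of `E` consisting of roots such that
every root is a linear combination of the base whose coefficients are either all
nonnegative integers or all nonpositive integers. -/
def IsBase (Φ : Set E) {r : ℕ} (b : Module.Basis (Fin r) ℝ E) : Prop :=
  (∀ i, b i ∈ Φ) ∧
    ∀ α ∈ Φ, (∀ i, ∃ k : ℕ, b.repr α i = (k : ℝ)) ∨ (∀ i, ∃ k : ℕ, b.repr α i = -(k : ℝ))

/-- The positive roots with respect to the base `b`. -/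
def posRoots (Φ : Set E) {r : ℕ} (b : Module.Basis (Fin r) ℝ E) : Set E :=
  {α ∈ Φ | ∀ i, 0 ≤ b.repr α i}

/-- The root poset order: `α ≤ β` iff `β − α` is a nonnegative combination of simple roots. -/
def rootLE {r : ℕ} (b : Module.Basis (Fin r) ℝ E) (α β : E) : Prop :=
  ∀ i, 0 ≤ b.repr (β - α) i

/-- `A` is an order ideal of the root poset. -/
def IsRootIdeal (Φ : Set E) {r : ℕ} (b : Module.Basis (Fin r) ℝ E) (A : Set E) : Prop :=
  A ⊆ posRoots Φ b ∧ ∀ α ∈ posRoots Φ b, ∀ β ∈ A, rootLE b α β → α ∈ A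

/-- The Weyl group of `Φ`: the subgroup of linear automorphisms of `E` generated by the
reflections `s_α`, `α ∈ Φ`. -/
def weylGroup (Φ : Set E) : Subgroup (E ≃ₗ[ℝ] E) :=
  Subgroup.closure {g | ∃ α ∈ Φ, ∀ x, g x = sRefl α x}

/-- The inversion set `I(w) = {α ∈ Φ⁺ : wα ∈ −Φ⁺}`. -/
def invSet (Φ : Set E) {r : ℕ} (b : Module.Basis (Fin r) ℝ E) (w : E ≃ₗ[ℝ] E) : Set E :=
  {α ∈ posRoots Φ b | -(w α) ∈ posRoots Φ b}

/-- The convex subset `W_D^A = {w ∈ W : D ⊆ I(w) ⊆ A}` of the Weyl group. -/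
def convexSubset (Φ : Set E) {r : ℕ} (b : Module.Basis (Fin r) ℝ E) (D A : Set E) :
    Set (E ≃ₗ[ℝ] E) :=
  {w | w ∈ weylGroup Φ ∧ D ⊆ invSet Φ b w ∧ invSet Φ b w ⊆ A}

/-- `δ_C(α) = |C_α|/|C|` where `C_α = {w ∈ C : wα ∈ −Φ⁺}`. -/
def delta (Φ : Set E) {r : ℕ} (b : Module.Basis (Fin r) ℝ E) (C : Set (E ≃ₗ[ℝ] E)) (α : E) : ℝ :=
  ({w ∈ C | -(w α) ∈ posRoots Φ b}.ncard : ℝ) / (C.ncard : ℝ)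


lemma sRefl_sRefl (α : E) (x : E) : sRefl α (sRefl α x) = x := by
  by_cases h : ⟪α, α⟫_ℝ = 0
  · simp [sRefl, inner_self_eq_zero.mp h]
  · simp only [sRefl, inner_sub_right, inner_smul_right]
    rw [sub_sub, ← add_smul]
    have h0 : (2 * ⟪α, x⟫_ℝ / ⟪α, α⟫_ℝ +
        2 * (⟪α, x⟫_ℝ - 2 * ⟪α, x⟫_ℝ / ⟪α, α⟫_ℝ * ⟪α, α⟫_ℝ) / ⟪α, α⟫_ℝ) = 0 := by
      field_simp
      ring
    rw [h0, zero_smul, sub_zero]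

lemma sRefl_inner (α x y : E) : ⟪sRefl α x, sRefl α y⟫_ℝ = ⟪x, y⟫_ℝ := by
  by_cases h : ⟪α, α⟫_ℝ = 0
  · simp [sRefl, inner_self_eq_zero.mp h]
  · simp only [sRefl, inner_sub_left, inner_sub_right, inner_smul_left, inner_smul_right,
      RCLike.ofReal_real_eq_id, id, conj_trivial]
    rw [real_inner_comm α x]
    field_simp
    ring

lemma sRefl_neg (α x : E) : sRefl α (-x) = -(sRefl α x) := by
  simp only [sRefl, inner_neg_right]
  rw [neg_sub', mul_neg, neg_div, neg_smul]

lemma sRefl_self (α : E) (h : ⟪α,α⟫_ℝ ≠ 0) : sRefl α α = -α := by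
  simp only [sRefl]
  rw [mul_div_assoc, div_self h, mul_one, two_smul]
  abel

lemma sRefl_add (α x y : E) : sRefl α (x + y) = sRefl α x + sRefl α y := by
  simp only [sRefl, inner_add_right]
  rw [mul_add, add_div, add_smul]
  abel

lemma sRefl_smul (α : E) (c : ℝ) (x : E) : sRefl α (c • x) = c • sRefl α x := by
  simp only [sRefl, real_inner_smul_right, smul_sub, smul_smul]
  congr 1
  rw [mul_comm c (2 * ⟪α, x⟫_ℝ / ⟪α, α⟫_ℝ)]
  ring_nf

/-- The reflection as a linear equivalence. -/
def sEquiv (α : E) : E ≃ₗ[ℝ] E where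
  toFun := sRefl α
  invFun := sRefl α
  left_inv := sRefl_sRefl α
  right_inv := sRefl_sRefl α
  map_add' := sRefl_add α
  map_smul' := sRefl_smul α

@[simp] lemma sEquiv_apply (α x : E) : sEquiv α x = sRefl α x := rfl

lemma weyl_prop {Φ : Set E} (hΦ : IsRootSystem Φ) {w : E ≃ₗ[ℝ] E} (hw : w ∈ weylGroup Φ) :
    (∀ x y : E, ⟪w x, w y⟫_ℝ = ⟪x, y⟫_ℝ) ∧ (∀ γ ∈ Φ, w γ ∈ Φ) ∧ (∀ γ ∈ Φ, w.symm γ ∈ Φ) := by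
  induction hw using Subgroup.closure_induction with
  | mem g hg =>
    obtain ⟨α, hα, hgα⟩ := hg
    have hsymm : ∀ x, g.symm x = g x := by
      intro x
      rw [LinearEquiv.symm_apply_eq, hgα, hgα, sRefl_sRefl]
    refine ⟨fun x y => by rw [hgα, hgα, sRefl_inner], fun γ hγ => by
      rw [hgα]; exact hΦ.2.2.2.1 α hα γ hγ, fun γ hγ => by
      rw [hsymm, hgα]; exact hΦ.2.2.2.1 α hα γ hγ⟩
  | one => exact ⟨fun x y => rfl, fun γ hγ => hγ, fun γ hγ => hγ⟩
  | mul u v hu hv ihu ihv =>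
    refine ⟨fun x y => by rw [show (u*v) x = u (v x) from rfl, show (u*v) y = u (v y) from rfl,
      ihu.1, ihv.1], fun γ hγ => ihu.2.1 _ (ihv.2.1 γ hγ), fun γ hγ => ?_⟩
    have : (u * v).symm γ = v.symm (u.symm γ) := rfl
    rw [this]
    exact ihv.2.2 _ (ihu.2.2 γ hγ)
  | inv u hu ihu =>
    refine ⟨fun x y => ?_, fun γ hγ => ihu.2.2 γ hγ, fun γ hγ => ihu.2.1 γ hγ⟩
    have := ihu.1 ((u⁻¹ : E ≃ₗ[ℝ] E) x) ((u⁻¹ : E ≃ₗ[ℝ] E) y)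
    rw [show u ((u⁻¹ : E ≃ₗ[ℝ] E) x) = x from u.apply_symm_apply x,
      show u ((u⁻¹ : E ≃ₗ[ℝ] E) y) = y from u.apply_symm_apply y] at this
    exact this.symm


lemma root_ne_zero {Φ : Set E} (hΦ : IsRootSystem Φ) {γ : E} (hγ : γ ∈ Φ) : γ ≠ 0 :=
  fun h => hΦ.2.1 (h ▸ hγ)

lemma root_inner_ne_zero {Φ : Set E} (hΦ : IsRootSystem Φ) {γ : E} (hγ : γ ∈ Φ) :
    ⟪γ, γ⟫_ℝ ≠ 0 := fun h =>
  root_ne_zero hΦ hγ (inner_self_eq_zero.mp h)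

lemma neg_root_mem {Φ : Set E} (hΦ : IsRootSystem Φ) {γ : E} (hγ : γ ∈ Φ) : -γ ∈ Φ := by
  have := hΦ.2.2.2.1 γ hγ γ hγ
  rwa [sRefl_self γ (root_inner_ne_zero hΦ hγ)] at this

lemma not_both_pos {Φ : Set E} (hΦ : IsRootSystem Φ) {r : ℕ} {b : Module.Basis (Fin r) ℝ E} {γ : E}
    (h1 : γ ∈ posRoots Φ b) (h2 : -γ ∈ posRoots Φ b) : False := by
  have hz : ∀ i, b.repr γ i = 0 := by
    intro i
    have := h1.2 i
    have h2' := h2.2 i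
    rw [map_neg] at h2'
    simp only [Finsupp.neg_apply] at h2'
    linarith
  have : γ = 0 := by
    have : b.repr γ = 0 := Finsupp.ext hz
    simpa using congrArg b.repr.symm this
  exact root_ne_zero hΦ h1.1 this

lemma pos_or_neg {Φ : Set E} (hΦ : IsRootSystem Φ) {r : ℕ} {b : Module.Basis (Fin r) ℝ E}
    (hb : IsBase Φ b) {γ : E} (hγ : γ ∈ Φ) : γ ∈ posRoots Φ b ∨ -γ ∈ posRoots Φ b := by
  rcases hb.2 γ hγ with h | h
  · left
    exact ⟨hγ, fun i => by obtain ⟨k, hk⟩ := h i; rw [hk]; positivity⟩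
  · right
    refine ⟨neg_root_mem hΦ hγ, fun i => ?_⟩
    obtain ⟨k, hk⟩ := h i
    rw [map_neg]
    simp only [Finsupp.neg_apply, hk, neg_neg]
    positivity

lemma base_mem_pos {Φ : Set E} {r : ℕ} {b : Module.Basis (Fin r) ℝ E} (hb : IsBase Φ b) (i : Fin r) :
    b i ∈ posRoots Φ b :=
  ⟨hb.1 i, fun j => by rw [b.repr_self, Finsupp.single_apply]; positivity⟩

lemma inner_nonneg_of_repr_nonneg {r : ℕ} {b : Module.Basis (Fin r) ℝ E} {y v : E}
    (h1 : ∀ i, 0 ≤ ⟪y, b i⟫_ℝ) (h2 : ∀ i, 0 ≤ b.repr v i) : 0 ≤ ⟪y, v⟫_ℝ := by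
  rw [← b.sum_repr v, inner_sum]
  refine Finset.sum_nonneg fun i _ => ?_
  rw [real_inner_smul_right]
  exact mul_nonneg (h2 i) (h1 i)

lemma weyl_inner_symm {Φ : Set E} (hΦ : IsRootSystem Φ) {w : E ≃ₗ[ℝ] E} (hw : w ∈ weylGroup Φ)
    (x y : E) : ⟪w x, y⟫_ℝ = ⟪x, w.symm y⟫_ℝ := by
  conv_lhs => rw [show y = w (w.symm y) from (w.apply_symm_apply y).symm]
  exact (weyl_prop hΦ hw).1 x (w.symm y)

lemma simple_perm {Φ : Set E} (hΦ : IsRootSystem Φ) {r : ℕ} {b : Module.Basis (Fin r) ℝ E}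
    (hb : IsBase Φ b) (i : Fin r) {γ : E} (hγ : γ ∈ posRoots Φ b) (hne : γ ≠ b i) :
    sRefl (b i) γ ∈ posRoots Φ b ∧ sRefl (b i) γ ≠ b i := by
  obtain ⟨j, hji, hjpos⟩ : ∃ j, j ≠ i ∧ 0 < b.repr γ j := by
    by_contra hcon
    push_neg at hcon
    have hz : ∀ j, j ≠ i → b.repr γ j = 0 := fun j hj =>
      le_antisymm (not_lt.mp (fun h => (hcon j hj).not_gt h)) (hγ.2 j)
    have hγeq : γ = b.repr γ i • b i := by
      conv_lhs => rw [← b.sum_repr γ]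
      rw [Finset.sum_eq_single i]
      · intro j _ hj; rw [hz j hj, zero_smul]
      · intro h; exact absurd (Finset.mem_univ i) h
    rcases hΦ.2.2.2.2.2 (b i) (hb.1 i) (b.repr γ i) (hγeq ▸ hγ.1) with h1 | h1
    · exact hne (by rw [hγeq, h1, one_smul])
    · have := hγ.2 i; rw [h1] at this; linarith
  have hsΦ : sRefl (b i) γ ∈ Φ := hΦ.2.2.2.1 (b i) (hb.1 i) γ hγ.1
  have hrepr : ∀ j, j ≠ i → b.repr (sRefl (b i) γ) j = b.repr γ j := by
    intro j hj
    simp only [sRefl, map_sub, map_smul, b.repr_self, Finsupp.sub_apply, Finsupp.smul_apply,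
      Finsupp.single_apply]
    rw [if_neg (fun h => hj h.symm)]
    simp
  have hpos : sRefl (b i) γ ∈ posRoots Φ b := by
    rcases hb.2 _ hsΦ with h | h
    · exact ⟨hsΦ, fun j => by obtain ⟨k, hk⟩ := h j; rw [hk]; positivity⟩
    · exfalso
      obtain ⟨k, hk⟩ := h j
      rw [hrepr j hji] at hk
      rw [hk] at hjpos
      have : (0:ℝ) ≤ k := Nat.cast_nonneg k
      linarith
  refine ⟨hpos, fun heq => ?_⟩
  have : γ = -(b i) := by
    have := congrArg (sRefl (b i)) heq
    rw [sRefl_sRefl, sRefl_self (b i) (root_inner_ne_zero hΦ (hb.1 i))] at this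
    exact this
  have h2 := hγ.2 i
  rw [this, map_neg] at h2
  simp only [Finsupp.neg_apply, b.repr_self, Finsupp.single_apply, if_pos rfl] at h2
  norm_num at h2

lemma exists_base_inner_neg {Φ : Set E} {r : ℕ} {b : Module.Basis (Fin r) ℝ E} {y β : E}
    (hβ : β ∈ posRoots Φ b) (hneg : ⟪y, β⟫_ℝ < 0) : ∃ i, ⟪y, b i⟫_ℝ < 0 := by
  by_contra h
  push_neg at h
  exact absurd (inner_nonneg_of_repr_nonneg h hβ.2) (not_le.mpr hneg)

end


lemma descent {E : Type*} [NormedAddCommGroup E] [InnerProductSpace ℝ E]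
    (Φ : Set E) (hΦ : IsRootSystem Φ) {r : ℕ} (b : Module.Basis (Fin r) ℝ E) (hb : IsBase Φ b)
    (D A : Set E) (x : E)
    (hx1 : ∀ α ∈ D, ⟪x, α⟫_ℝ ≤ 0) (hx2 : ∀ β ∈ posRoots Φ b \ A, 0 ≤ ⟪x, β⟫_ℝ) :
    ∀ n : ℕ, ∀ w ∈ convexSubset Φ b D A,
      ({β ∈ posRoots Φ b | ⟪w x, β⟫_ℝ < 0}).ncard ≤ n →
      ∃ w' ∈ convexSubset Φ b D A, ∀ β ∈ posRoots Φ b, 0 ≤ ⟪w' x, β⟫_ℝ := by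
  intro n
  induction n with
  | zero =>
    intro w hwC hcard
    refine ⟨w, hwC, fun β hβ => ?_⟩
    by_contra hneg
    push_neg at hneg
    have hfin : ({β ∈ posRoots Φ b | ⟪w x, β⟫_ℝ < 0}).Finite :=
      hΦ.1.subset (fun γ hγ => hγ.1.1)
    have : 0 < ({β ∈ posRoots Φ b | ⟪w x, β⟫_ℝ < 0}).ncard :=
      Set.ncard_pos hfin |>.mpr ⟨β, hβ, hneg⟩
    omega
  | succ n ih =>
    intro w hwC hcard
    by_cases hdom : ∀ β ∈ posRoots Φ b, 0 ≤ ⟪w x, β⟫_ℝ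
    · exact ⟨w, hwC, hdom⟩
    · push_neg at hdom
      obtain ⟨β₀, hβ₀, hβ₀neg⟩ := hdom
      obtain ⟨i, hi⟩ := exists_base_inner_neg hβ₀ hβ₀neg
      have hbi : b i ∈ Φ := hb.1 i
      have hbiI : ⟪b i, b i⟫_ℝ ≠ 0 := root_inner_ne_zero hΦ hbi
      set w' : E ≃ₗ[ℝ] E := sEquiv (b i) * w with hw'def
      have hw'apply : ∀ y : E, w' y = sRefl (b i) (w y) := fun y => rfl
      have hworth : ∀ u v : E, ⟪w u, w v⟫_ℝ = ⟪u, v⟫_ℝ := (weyl_prop hΦ hwC.1).1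
      have hwroot : ∀ γ ∈ Φ, w γ ∈ Φ := (weyl_prop hΦ hwC.1).2.1
      have sAdj : ∀ u v : E, ⟪sRefl (b i) u, v⟫_ℝ = ⟪u, sRefl (b i) v⟫_ℝ := by
        intro u v
        conv_lhs => rw [show v = sRefl (b i) (sRefl (b i) v) from (sRefl_sRefl _ _).symm]
        rw [sRefl_inner]
      have hw'W : w' ∈ weylGroup Φ := by
        refine mul_mem (Subgroup.subset_closure ?_) hwC.1
        exact ⟨b i, hbi, fun y => rfl⟩
      have hw'C : w' ∈ convexSubset Φ b D A := by
        refine ⟨hw'W, ?_, ?_⟩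
        · -- D ⊆ invSet w'
          intro α hα
          have hαinv : α ∈ invSet Φ b w := hwC.2.1 hα
          have hαpos : α ∈ posRoots Φ b := hαinv.1
          have hnwα : -(w α) ∈ posRoots Φ b := hαinv.2
          have hne : -(w α) ≠ b i := by
            intro h
            have heq : ⟪x, α⟫_ℝ = -⟪w x, b i⟫_ℝ := by
              rw [← hworth x α, show w α = -(b i) from by rw [← h, neg_neg],
                inner_neg_right]
            have h1 := hx1 α hα
            rw [heq] at h1
            linarith
          have := simple_perm hΦ hb i hnwα hne
          refine ⟨hαpos, ?_⟩
          rw [hw'apply, ← sRefl_neg]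
          exact this.1
        · -- invSet w' ⊆ A
          intro γ hγ
          have hγpos : γ ∈ posRoots Φ b := hγ.1
          have hγneg : -(w' γ) ∈ posRoots Φ b := hγ.2
          rcases pos_or_neg hΦ hb (hwroot γ hγpos.1) with hp | hn
          · by_cases hbicase : w γ = b i
            · -- ⟪x, γ⟫ < 0, so γ ∈ A by hx2
              by_contra hγA
              have : 0 ≤ ⟪x, γ⟫_ℝ := hx2 γ ⟨hγpos, hγA⟩
              rw [← hworth x γ, hbicase] at this
              linarith
            · exfalso
              have := simple_perm hΦ hb i hp hbicase
              rw [hw'apply] at hγneg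
              exact not_both_pos hΦ this.1 hγneg
          · exact hwC.2.2 ⟨hγpos, hn⟩
      -- cardinality decrease
      set N : Set E := {β ∈ posRoots Φ b | ⟪w x, β⟫_ℝ < 0} with hNdef
      set N' : Set E := {β ∈ posRoots Φ b | ⟪w' x, β⟫_ℝ < 0} with hN'def
      have hNfin : N.Finite := hΦ.1.subset (fun γ hγ => hγ.1.1)
      have hbiN : b i ∈ N := ⟨base_mem_pos hb i, hi⟩
      have hsub : N' ⊆ sRefl (b i) '' (N \ {b i}) := by
        intro β hβ
        have hβpos : β ∈ posRoots Φ b := hβ.1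
        have hβneg : ⟪w x, sRefl (b i) β⟫_ℝ < 0 := by
          have := hβ.2
          rw [hw'apply, sAdj] at this
          exact this
        have hβne : β ≠ b i := by
          intro h
          rw [h, sRefl_self (b i) hbiI, inner_neg_right] at hβneg
          linarith
        have hperm := simple_perm hΦ hb i hβpos hβne
        exact ⟨sRefl (b i) β, ⟨⟨hperm.1, hβneg⟩, hperm.2⟩, sRefl_sRefl _ _⟩
      have hinj : Function.Injective (sRefl (b i)) :=
        Function.Involutive.injective (sRefl_sRefl (b i))
      have hlt : N'.ncard < N.ncard := by
        calc N'.ncard ≤ (sRefl (b i) '' (N \ {b i})).ncard := by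
              refine Set.ncard_le_ncard hsub ?_
              exact ((hNfin.diff (t := {b i})).image _)
          _ = (N \ {b i}).ncard := Set.ncard_image_of_injective _ hinj
          _ < N.ncard := Set.ncard_diff_singleton_lt_of_mem hbiN hNfin
      exact ih w' hw'C (show N'.ncard ≤ n by omega)

/-- The fundamental alcove `Q_id = {x : ⟨x,α⟩ ≥ 0 ∀α ∈ Φ⁺, ⟨x,ξ⟩ ≤ 1}`. -/
def fundAlcove {E : Type*} [NormedAddCommGroup E] [InnerProductSpace ℝ E]
    (Φ : Set E) {r : ℕ} (b : Module.Basis (Fin r) ℝ E) (ξ : E) : Set E :=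
  {x | (∀ α ∈ posRoots Φ b, 0 ≤ ⟪x, α⟫_ℝ) ∧ ⟪x, ξ⟫_ℝ ≤ 1}

/-- Let `C = W_D^A` (`D ⊆ A ⊆ Φ⁺`) be nonempty.  Then the union of the
alcoves `Q_w = w⁻¹Q_id`, `w ∈ C`, equals the polyhedron cut out by `⟨x,α⟩ ≤ 0` for `α ∈ D`,
`⟨x,β⟩ ≥ 0` for `β ∈ Φ⁺ ∖ A`, and `⟨x, w⁻¹ξ⟩ ≤ 1` for `w ∈ C`.  In particular the
generalized order polytope `O(C) = ⋃_{w∈C} Q_w` is convex. -/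
theorem stmt11 {E : Type*} [NormedAddCommGroup E] [InnerProductSpace ℝ E]
    (Φ : Set E) (hΦ : IsRootSystem Φ) {r : ℕ} (b : Module.Basis (Fin r) ℝ E) (hb : IsBase Φ b)
    (ξ : E) (hξ : ξ ∈ posRoots Φ b) (hξmax : ∀ α ∈ posRoots Φ b, rootLE b α ξ)
    (D A : Set E) (hD : D ⊆ A) (hA : A ⊆ posRoots Φ b)
    (hCne : (convexSubset Φ b D A).Nonempty) :
    (⋃ w ∈ convexSubset Φ b D A, (⇑w) ⁻¹' fundAlcove Φ b ξ) =
        {x : E | (∀ α ∈ D, ⟪x, α⟫_ℝ ≤ 0) ∧ (∀ β ∈ posRoots Φ b \ A, 0 ≤ ⟪x, β⟫_ℝ) ∧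
          ∀ w ∈ convexSubset Φ b D A, ⟪x, w.symm ξ⟫_ℝ ≤ 1} ∧
      Convex ℝ (⋃ w ∈ convexSubset Φ b D A, (⇑w) ⁻¹' fundAlcove Φ b ξ) := by
  have hmain : (⋃ w ∈ convexSubset Φ b D A, (⇑w) ⁻¹' fundAlcove Φ b ξ) =
      {x : E | (∀ α ∈ D, ⟪x, α⟫_ℝ ≤ 0) ∧ (∀ β ∈ posRoots Φ b \ A, 0 ≤ ⟪x, β⟫_ℝ) ∧
        ∀ w ∈ convexSubset Φ b D A, ⟪x, w.symm ξ⟫_ℝ ≤ 1} := by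
    ext x
    simp only [Set.mem_iUnion, Set.mem_preimage, Set.mem_setOf_eq, exists_prop]
    constructor
    · rintro ⟨w, hwC, hwx⟩
      have hworth := (weyl_prop hΦ hwC.1).1
      have hwroot := (weyl_prop hΦ hwC.1).2.1
      obtain ⟨hwx1, hwx2⟩ := hwx
      refine ⟨?_, ?_, ?_⟩
      · intro α hα
        have hαinv := hwC.2.1 hα
        have h := hwx1 _ hαinv.2
        rw [inner_neg_right] at h
        have h2 : ⟪w x, w α⟫_ℝ = ⟪x, α⟫_ℝ := hworth x α
        linarith
      · intro β hβ
        have hβpos := hβ.1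
        have hβnotinv : β ∉ invSet Φ b w := fun h => hβ.2 (hwC.2.2 h)
        have hwβ : w β ∈ Φ := hwroot β hβpos.1
        rcases pos_or_neg hΦ hb hwβ with hp | hn
        · have h := hwx1 _ hp
          rw [hworth x β] at h
          exact h
        · exact absurd ⟨hβpos, hn⟩ hβnotinv
      · intro u huC
        have huroot := (weyl_prop hΦ huC.1).2.2
        have hγΦ : w (u.symm ξ) ∈ Φ := hwroot _ (huroot ξ hξ.1)
        have hxu : ⟪x, u.symm ξ⟫_ℝ = ⟪w x, w (u.symm ξ)⟫_ℝ := (hworth x _).symm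
        rcases pos_or_neg hΦ hb hγΦ with hp | hn
        · have hle := hξmax _ hp
          have hbase : ∀ i, 0 ≤ ⟪w x, b i⟫_ℝ := fun i => hwx1 _ (base_mem_pos hb i)
          have h0 : 0 ≤ ⟪w x, ξ - w (u.symm ξ)⟫_ℝ := inner_nonneg_of_repr_nonneg hbase hle
          rw [inner_sub_right] at h0
          rw [hxu]
          linarith
        · have h := hwx1 _ hn
          rw [inner_neg_right] at h
          rw [hxu]
          linarith
    · rintro ⟨hx1, hx2, hx3⟩
      obtain ⟨w₀, hw₀⟩ := hCne
      obtain ⟨w, hwC, hdom⟩ := descent Φ hΦ b hb D A x hx1 hx2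
        ({β ∈ posRoots Φ b | ⟪w₀ x, β⟫_ℝ < 0}).ncard w₀ hw₀ le_rfl
      refine ⟨w, hwC, hdom, ?_⟩
      rw [weyl_inner_symm hΦ hwC.1]
      exact hx3 w hwC
  refine ⟨hmain, ?_⟩
  rw [hmain]
  intro y hy z hz a c ha hc hac
  refine ⟨fun α hα => ?_, fun β hβ => ?_, fun u huC => ?_⟩ <;>
    simp only [inner_add_left, real_inner_smul_left]
  · nlinarith [hy.1 α hα, hz.1 α hα]
  · nlinarith [hy.2.1 β hβ, hz.2.1 β hβ]
  · nlinarith [hy.2.2 u huC, hz.2.2 u huC]
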